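/- Every point of the cube [0,R]^3 lies within distance R of at least three of the six face centers of the cube. (That is, the deployment of six sensors of sensing radius R at the face centers 3-covers the entire cube.) -/

import Mathlib

open Real Metric

private lemma dist_le_of_sq (R : ℝ) (hR : 0 ≤ R) (p c : EuclideanSpace ℝ (Fin 3))
    (h : (p 0 - c 0)^2 + (p 1 - c 1)^2 + (p 2 - c 2)^2 ≤ R^2) : dist p c ≤ R := by
  rw [EuclideanSpace.dist_eq]
  calc Real.sqrt (∑ i, dist (p i) (c i) ^ 2) ≤ Real.sqrt (R^2) := by
        apply Real.sqrt_le_sqrt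
        simpa [Fin.sum_univ_three, Real.dist_eq, sq_abs] using h
    _ = R := Real.sqrt_sq hR

private lemma three_le_ncard {X : Type*} {S : Set X} (hS : S.Finite) (a b c : X)
    (ha : a ∈ S) (hb : b ∈ S) (hc : c ∈ S) (hab : a ≠ b) (hac : a ≠ c) (hbc : b ≠ c) :
    3 ≤ S.ncard := by
  have hsub : ({a, b, c} : Set X) ⊆ S := by
    intro x hx; rcases hx with rfl | rfl | rfl <;> assumption
  have : ({a, b, c} : Set X).ncard = 3 := by
    rw [Set.ncard_insert_of_notMem (by simp [hab, hac]) (by simp),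
        Set.ncard_insert_of_notMem (by simp [hbc]) (by simp), Set.ncard_singleton]
  calc 3 = ({a,b,c} : Set X).ncard := this.symm
    _ ≤ S.ncard := Set.ncard_le_ncard hsub hS

/-- Every point of the cube `[0,R]^3` lies within distance `R` of at least
three of the six face centers of the cube. -/
theorem sixsoid_three_coverage (R : ℝ) (hR : 0 < R)
    (p : EuclideanSpace ℝ (Fin 3)) (hp : ∀ i, p i ∈ Set.Icc 0 R) :
    3 ≤ Set.ncard {c ∈ ({!₂[R/2, R/2, 0], !₂[R/2, R/2, R], !₂[R/2, 0, R/2],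
        !₂[R/2, R, R/2], !₂[0, R/2, R/2], !₂[R, R/2, R/2]} :
        Set (EuclideanSpace ℝ (Fin 3))) | dist p c ≤ R} := by
  obtain ⟨h00, h01⟩ := hp 0
  obtain ⟨h10, h11⟩ := hp 1
  obtain ⟨h20, h21⟩ := hp 2
  have hfin : ({c ∈ ({!₂[R/2, R/2, 0], !₂[R/2, R/2, R], !₂[R/2, 0, R/2],
        !₂[R/2, R, R/2], !₂[0, R/2, R/2], !₂[R, R/2, R/2]} :
        Set (EuclideanSpace ℝ (Fin 3))) | dist p c ≤ R} : Set _).Finite := by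
    have hT : ({!₂[R/2, R/2, 0], !₂[R/2, R/2, R], !₂[R/2, 0, R/2],
        !₂[R/2, R, R/2], !₂[0, R/2, R/2], !₂[R, R/2, R/2]} :
        Set (EuclideanSpace ℝ (Fin 3))).Finite := Set.toFinite _
    exact hT.subset fun x hx => hx.1
  -- choose the closer center along each axis
  set cz : EuclideanSpace ℝ (Fin 3) := if p 2 ≤ R/2 then !₂[R/2, R/2, 0] else !₂[R/2, R/2, R] with hcz
  set cy : EuclideanSpace ℝ (Fin 3) := if p 1 ≤ R/2 then !₂[R/2, 0, R/2] else !₂[R/2, R, R/2] with hcy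
  set cx : EuclideanSpace ℝ (Fin 3) := if p 0 ≤ R/2 then !₂[0, R/2, R/2] else !₂[R, R/2, R/2] with hcx
  have hczm : cz ∈ ({!₂[R/2, R/2, 0], !₂[R/2, R/2, R], !₂[R/2, 0, R/2],
        !₂[R/2, R, R/2], !₂[0, R/2, R/2], !₂[R, R/2, R/2]} :
        Set (EuclideanSpace ℝ (Fin 3))) := by
    rw [hcz]; split <;> simp
  have hcym : cy ∈ ({!₂[R/2, R/2, 0], !₂[R/2, R/2, R], !₂[R/2, 0, R/2],
        !₂[R/2, R, R/2], !₂[0, R/2, R/2], !₂[R, R/2, R/2]} :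
        Set (EuclideanSpace ℝ (Fin 3))) := by
    rw [hcy]; split <;> simp
  have hcxm : cx ∈ ({!₂[R/2, R/2, 0], !₂[R/2, R/2, R], !₂[R/2, 0, R/2],
        !₂[R/2, R, R/2], !₂[0, R/2, R/2], !₂[R, R/2, R/2]} :
        Set (EuclideanSpace ℝ (Fin 3))) := by
    rw [hcx]; split <;> simp
  have hdz : dist p cz ≤ R := by
    rw [hcz]; split <;> rename_i h <;>
      (apply dist_le_of_sq R hR.le; simp only [Matrix.cons_val_zero, Matrix.cons_val_one,
        Matrix.head_cons, Matrix.cons_val_two, Matrix.tail_cons, PiLp.toLp_apply]; nlinarith)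
  have hdy : dist p cy ≤ R := by
    rw [hcy]; split <;> rename_i h <;>
      (apply dist_le_of_sq R hR.le; simp only [Matrix.cons_val_zero, Matrix.cons_val_one,
        Matrix.head_cons, Matrix.cons_val_two, Matrix.tail_cons, PiLp.toLp_apply]; nlinarith)
  have hdx : dist p cx ≤ R := by
    rw [hcx]; split <;> rename_i h <;>
      (apply dist_le_of_sq R hR.le; simp only [Matrix.cons_val_zero, Matrix.cons_val_one,
        Matrix.head_cons, Matrix.cons_val_two, Matrix.tail_cons, PiLp.toLp_apply]; nlinarith)
  have hzy : cz ≠ cy := by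
    rw [hcz, hcy]; split <;> split <;> (intro h; have := congrArg (fun v => v 1) h; simp at this; linarith)
  have hzx : cz ≠ cx := by
    rw [hcz, hcx]; split <;> split <;> (intro h; have := congrArg (fun v => v 0) h; simp at this; linarith)
  have hyx : cy ≠ cx := by
    rw [hcy, hcx]; split <;> split <;> (intro h; have := congrArg (fun v => v 0) h; simp at this; linarith)
  exact three_le_ncard hfin cz cy cx ⟨hczm, hdz⟩ ⟨hcym, hdy⟩ ⟨hcxm, hdx⟩ hzy hzx hyx
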